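/- Transversal slices preserve boundary regularity and measure-zero exceptional sets: let Ω ⊂ ℂⁿ (n ≥ 3) have C^{1,1} boundary near 0 given as {x₁ < φ(y₁, z')} with φ ∈ C^{1,1}, and for t ∈ ℂ^{n−2} let p_t(z₁,z₂) = (z₁, z₂, z₂ t) and Ω^t = p_t^{−1}(Ω) ⊂ ℂ². Then for t sufficiently small, ∂Ω^t is C^{1,1}-smooth near 0 (p_t(ℂ²) is transverse to ∂Ω), and if F ⊂ ∂Ω is closed with λ_{2n−1}(F) = 0, then for Lebesgue-almost every t ∈ ℂ^{n−2}, the slice F^t = p_t^{−1}(F) ⊂ ∂Ω^t satisfies λ₃(F^t) = 0. -/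
import Mathlib


open MeasureTheory Set

noncomputable section

/-- Transversal slices preserve boundary regularity and measure-zero exceptional sets.
In graph coordinates, the boundary of `Ω ⊆ ℂⁿ` near `0` is the graph
`x₁ = φ(y₁, z₂, z'')` of a `C^{1,1}` function `φ` on `ℝ × ℂ × ℂᵐ` (`m = n - 2`), and the
slice map is `q_t(y₁, z₂) = (y₁, z₂, z₂·t)`. Then (i) for every `t` the sliced graph
function `φ ∘ q_t` is again `C^{1,1}` (the slice `p_t(ℂ²)` is transverse to `∂Ω`, so
`∂Ω^t` is `C^{1,1}`-smooth), and (ii) if `G` (the exceptional set `F` read in graph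
coordinates) has `(2n-1)`-dimensional Lebesgue measure `0`, then for almost every
`t ∈ ℂᵐ` the slice `q_t⁻¹(G)` has `3`-dimensional Lebesgue measure `0`. -/
theorem transversal_slice (m : ℕ)
    (φ : ℝ × ℂ × (Fin m → ℂ) → ℝ) (K : NNReal)
    (hφdiff : Differentiable ℝ φ)
    (hφlip : LipschitzWith K (fderiv ℝ φ))
    (G : Set (ℝ × ℂ × (Fin m → ℂ)))
    (hGmeas : MeasurableSet G)
    (hGnull : volume G = 0) :
    (∀ t : (Fin m → ℂ),
      Differentiable ℝ (fun p : ℝ × ℂ => φ (p.1, p.2, p.2 • t)) ∧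
      ∃ K' : NNReal, LipschitzWith K' (fderiv ℝ (fun p : ℝ × ℂ => φ (p.1, p.2, p.2 • t)))) ∧
    (∀ᵐ t : (Fin m → ℂ),
      volume {p : ℝ × ℂ | (p.1, p.2, p.2 • t) ∈ G} = 0) := by
  constructor
  · intro t
    -- `q_t` as a continuous linear map
    set L : (ℝ × ℂ) →L[ℝ] ℝ × ℂ × (Fin m → ℂ) :=
      (ContinuousLinearMap.fst ℝ ℝ ℂ).prod
        ((ContinuousLinearMap.snd ℝ ℝ ℂ).prod
          (((ContinuousLinearMap.id ℝ ℂ).smulRight t).comp (ContinuousLinearMap.snd ℝ ℝ ℂ)))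
      with hLdef
    have hLe : (fun p : ℝ × ℂ => φ (p.1, p.2, p.2 • t)) = φ ∘ L := rfl
    have hdiff : Differentiable ℝ (φ ∘ L) := hφdiff.comp L.differentiable
    -- precomposition with `L` as a continuous linear map on spaces of CLMs
    set g : ((ℝ × ℂ × (Fin m → ℂ)) →L[ℝ] ℝ) →L[ℝ] ((ℝ × ℂ) →L[ℝ] ℝ) :=
      (ContinuousLinearMap.compL ℝ (ℝ × ℂ) (ℝ × ℂ × (Fin m → ℂ)) ℝ).flip L with hgdef
    have hfd : fderiv ℝ (φ ∘ L) = g ∘ (fderiv ℝ φ) ∘ L := by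
      funext p
      have := fderiv_comp p (hφdiff (L p)) L.differentiableAt
      rw [this, L.fderiv]
      rfl
    refine ⟨by rw [hLe]; exact hdiff, ⟨‖g‖₊ * (K * ‖L‖₊), ?_⟩⟩
    rw [hLe, hfd]
    exact g.lipschitz.comp (hφlip.comp L.lipschitz)
  · -- the set `S' ⊆ (ℝ × ℂ) × ℂᵐ` of all `((y,z), t)` with `(y, z, z • t) ∈ G`
    set S' : Set ((ℝ × ℂ) × (Fin m → ℂ)) :=
      {q | (q.1.1, q.1.2, q.1.2 • q.2) ∈ G} with hS'def
    have hS'meas : MeasurableSet S' := by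
      have hc : Continuous (fun q : (ℝ × ℂ) × (Fin m → ℂ) => (q.1.1, q.1.2, q.1.2 • q.2)) := by
        fun_prop
      exact hc.measurable hGmeas
    -- almost every vertical fiber of `G` is null
    have hG' : (volume : Measure ((ℝ × ℂ) × (Fin m → ℂ)))
        (MeasurableEquiv.prodAssoc ⁻¹' G) = 0 := by
      rw [MeasureTheory.volume_preserving_prodAssoc.measure_preimage hGmeas.nullMeasurableSet]
      exact hGnull
    have hfib : ∀ᵐ p : ℝ × ℂ, volume {w : Fin m → ℂ | (p.1, p.2, w) ∈ G} = 0 := by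
      rw [Measure.volume_eq_prod] at hG'
      have := Measure.measure_ae_null_of_prod_null hG'
      filter_upwards [this] with p hp
      exact hp
    -- almost every `p : ℝ × ℂ` has `p.2 ≠ 0`
    have hz : ∀ᵐ p : ℝ × ℂ, p.2 ≠ 0 := by
      rw [ae_iff]
      have he : {p : ℝ × ℂ | ¬ p.2 ≠ 0} = (Set.univ : Set ℝ) ×ˢ ({0} : Set ℂ) := by
        ext p
        simp only [Set.mem_setOf_eq, not_not, Set.mem_prod, Set.mem_univ,
          Set.mem_singleton_iff, true_and]
      rw [he, Measure.volume_eq_prod, Measure.prod_prod, measure_singleton, mul_zero]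
    -- hence `S'` is null, by Fubini
    have hS'null : (volume : Measure ((ℝ × ℂ) × (Fin m → ℂ))) S' = 0 := by
      rw [Measure.volume_eq_prod, Measure.measure_prod_null hS'meas]
      filter_upwards [hfib, hz] with p hp hpz
      have he : (LinearEquiv.smulOfNeZero ℂ (Fin m → ℂ) p.2 hpz).restrictScalars ℝ
          ⁻¹' {w : Fin m → ℂ | (p.1, p.2, w) ∈ G}
          = Prod.mk p ⁻¹' S' := rfl
      have := MeasureTheory.Measure.addHaar_preimage_linearEquiv
        (volume : Measure (Fin m → ℂ))
        ((LinearEquiv.smulOfNeZero ℂ (Fin m → ℂ) p.2 hpz).restrictScalars ℝ)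
        {w : Fin m → ℂ | (p.1, p.2, w) ∈ G}
      rw [he, hp, mul_zero] at this
      exact this
    -- swap the factors and apply Fubini again
    have hswap : (volume : Measure ((Fin m → ℂ) × (ℝ × ℂ))) (Prod.swap ⁻¹' S') = 0 := by
      rw [Measure.volume_eq_prod]
      rw [Measure.volume_eq_prod] at hS'null
      have hmp : MeasurePreserving (Prod.swap : (Fin m → ℂ) × (ℝ × ℂ) → (ℝ × ℂ) × (Fin m → ℂ))
          ((volume : Measure (Fin m → ℂ)).prod (volume : Measure (ℝ × ℂ)))
          ((volume : Measure (ℝ × ℂ)).prod (volume : Measure (Fin m → ℂ))) :=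
        Measure.measurePreserving_swap
      rw [hmp.measure_preimage hS'meas.nullMeasurableSet]
      exact hS'null
    rw [Measure.volume_eq_prod] at hswap
    have := Measure.measure_ae_null_of_prod_null hswap
    filter_upwards [this] with t ht
    exact ht
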